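/- Let h ∈ R^N, r > 0, and H a symmetric traceless N×N matrix. If (1/2)|h|²/r = (N/2) λ_max( (h ⊗ h)/r - H ), then H = (h ⊗ h)/r - (1/N)(|h|²/r) I. -/

import Mathlib

open Matrix

/-- largest eigenvalue of a real symmetric (Hermitian) matrix -/
noncomputable def lamMax {N : ℕ} {A : Matrix (Fin N) (Fin N) ℝ} (hA : A.IsHermitian) : ℝ :=
  ⨆ i, hA.eigenvalues i

theorem herm_smul {N : ℕ} (r : ℝ) {A : Matrix (Fin N) (Fin N) ℝ} (hA : A.IsHermitian) :
    (r • A).IsHermitian := by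
  ext i j
  have h2 := hA.apply i j
  simp only [star_trivial] at h2
  simp only [conjTranspose_apply, Matrix.smul_apply, star_trivial, smul_eq_mul]
  rw [← h2]

theorem herm_vmv {N : ℕ} (h : Fin N → ℝ) : (vecMulVec h h).IsHermitian := by
  ext i j
  simp [conjTranspose_apply, vecMulVec_apply, mul_comm]

lemma my_trace_eq {N : ℕ} {A : Matrix (Fin N) (Fin N) ℝ} (hA : A.IsHermitian) :
    A.trace = ∑ i, hA.eigenvalues i := by
  conv_lhs => rw [hA.spectral_theorem]
  rw [Unitary.conjStarAlgAut_apply]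
  rw [Matrix.trace_mul_cycle]
  rw [show (star (hA.eigenvectorUnitary : Matrix (Fin N) (Fin N) ℝ)) * hA.eigenvectorUnitary = 1 from
    (Matrix.mem_unitaryGroup_iff').mp hA.eigenvectorUnitary.2]
  simp [Matrix.trace_diagonal]

lemma my_const_eig {N : ℕ} {A : Matrix (Fin N) (Fin N) ℝ} (hA : A.IsHermitian) (c : ℝ)
    (hc : ∀ i, hA.eigenvalues i = c) : A = c • (1 : Matrix (Fin N) (Fin N) ℝ) := by
  have : Matrix.diagonal (RCLike.ofReal ∘ hA.eigenvalues) = c • (1 : Matrix (Fin N) (Fin N) ℝ) := by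
    rw [show (RCLike.ofReal ∘ hA.eigenvalues : Fin N → ℝ) = fun _ => c by
      funext i; simp [hc i]]
    simp [Matrix.smul_one_eq_diagonal]
  rw [hA.spectral_theorem, this]
  rw [Unitary.conjStarAlgAut_apply]
  rw [Matrix.mul_smul, Matrix.smul_mul, mul_one]
  rw [show (hA.eigenvectorUnitary : Matrix (Fin N) (Fin N) ℝ) * star (hA.eigenvectorUnitary : Matrix (Fin N) (Fin N) ℝ) = 1 from
    (Matrix.mem_unitaryGroup_iff).mp hA.eigenvectorUnitary.2]

theorem equality_case {N : ℕ} (hN : 0 < N) (h : Fin N → ℝ) (r : ℝ) (hr : 0 < r)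
    (H : Matrix (Fin N) (Fin N) ℝ) (hH : H.IsHermitian) (hHtr : H.trace = 0)
    (heq : (1 / 2) * (h ⬝ᵥ h) / r =
      ((N : ℝ) / 2) * lamMax ((herm_smul r⁻¹ (herm_vmv h)).sub hH)) :
    H = r⁻¹ • vecMulVec h h -
      ((1 / (N : ℝ)) * ((h ⬝ᵥ h) / r)) • (1 : Matrix (Fin N) (Fin N) ℝ) := by
  haveI : Nonempty (Fin N) := ⟨⟨0, hN⟩⟩
  set hM := (herm_smul r⁻¹ (herm_vmv h)).sub hH with hMdef
  set lam := lamMax hM with hlam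
  have hNne : (N : ℝ) ≠ 0 := Nat.cast_ne_zero.mpr hN.ne'
  -- trace of M
  have htrM : (r⁻¹ • vecMulVec h h - H).trace = (h ⬝ᵥ h) / r := by
    rw [Matrix.trace_sub, hHtr, sub_zero, Matrix.trace_smul]
    simp [Matrix.trace, Matrix.diag, vecMulVec_apply, dotProduct, div_eq_inv_mul,
      Finset.mul_sum]
  have hsum : ∑ i, hM.eigenvalues i = (h ⬝ᵥ h) / r := by
    rw [← my_trace_eq hM, htrM]
  -- each eigenvalue ≤ lam
  have hle : ∀ i, hM.eigenvalues i ≤ lam := fun i =>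
    le_ciSup (Set.Finite.bddAbove (Set.finite_range _)) i
  -- from heq: (h⬝h)/r = N * lam
  have hNl : (h ⬝ᵥ h) / r = (N : ℝ) * lam := by
    have := heq
    field_simp at this ⊢
    linarith
  -- all eigenvalues equal lam
  have hall : ∀ i, hM.eigenvalues i = lam := by
    have hz : ∑ i, (lam - hM.eigenvalues i) = 0 := by
      rw [Finset.sum_sub_distrib, Finset.sum_const, Finset.card_univ, Fintype.card_fin,
        hsum, hNl, nsmul_eq_mul, sub_self]
    intro i
    have := (Finset.sum_eq_zero_iff_of_nonneg (fun j _ => sub_nonneg.mpr (hle j))).mp hz i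
      (Finset.mem_univ i)
    linarith
  have hMeq : r⁻¹ • vecMulVec h h - H = lam • (1 : Matrix (Fin N) (Fin N) ℝ) :=
    my_const_eig hM lam hall
  have hlamval : lam = (1 / (N : ℝ)) * ((h ⬝ᵥ h) / r) := by
    rw [hNl]
    field_simp
  rw [← hlamval, ← hMeq]
  exact (sub_sub_cancel _ _).symm
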